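/- Let n be a positive integer, m a nonzero integer, k an integer, and ε ∈ {1,-1}. Suppose there exists δ > 0 such that for all θ ∈ (0, δ), 1 - e^{i m θ / n} = ε · e^{i k θ} · (1 - e^{i θ}). Then |m| = n; moreover if m > 0 then ε = 1 and k = 0, and if m < 0 then ε = -1 and k = -1. -/

import Mathlib

open Complex

private lemma hasDerivAt_exp_mul_zero (c : ℂ) :
    HasDerivAt (fun θ : ℝ => Complex.exp (c * θ)) c 0 := by
  have h1 : HasDerivAt (fun z : ℂ => Complex.exp (c * z)) c 0 := by
    have := (Complex.hasDerivAt_exp ((c : ℂ) * 0)).comp (0 : ℂ)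
      ((hasDerivAt_id (0 : ℂ)).const_mul c)
    simpa [Function.comp_def] using this
  simpa using h1.comp_ofReal

private lemma exp_eq_one_small (c : ℤ) (θ₀ : ℝ) (h0 : 0 < θ₀)
    (hsmall : |(c : ℝ)| * θ₀ < 2 * Real.pi)
    (he : Complex.exp (Complex.I * ((c : ℂ) * (θ₀ : ℂ))) = 1) : c = 0 := by
  rw [Complex.exp_eq_one_iff] at he
  obtain ⟨j, hj⟩ := he
  have h2 : ((c : ℂ) * (θ₀ : ℂ)) = ((j : ℂ) * (2 * (Real.pi : ℂ))) := by
    linear_combination (-Complex.I) * hj +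
      ((c : ℂ) * (θ₀ : ℂ) - (j : ℂ) * (2 * (Real.pi : ℂ))) * Complex.I_mul_I
  have h3 : (c : ℝ) * θ₀ = (j : ℝ) * (2 * Real.pi) := by exact_mod_cast h2
  by_contra hc
  have hc1 : (1 : ℝ) ≤ |(c : ℝ)| := by
    exact_mod_cast Int.one_le_abs (show c ≠ 0 by omega)
  have hj0 : j ≠ 0 := by
    rintro rfl
    simp only [Int.cast_zero, zero_mul] at h3
    rcases mul_eq_zero.mp h3 with h | h
    · exact hc (by exact_mod_cast h)
    · exact h0.ne' h
  have hj1 : (1 : ℝ) ≤ |(j : ℝ)| := by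
    exact_mod_cast Int.one_le_abs (show j ≠ 0 by omega)
  have habs := congrArg (fun x : ℝ => |x|) h3
  rw [abs_mul, abs_mul, abs_of_pos h0, abs_of_pos (by positivity : (0:ℝ) < 2 * Real.pi)]
    at habs
  nlinarith [Real.pi_pos]

private lemma exists_theta (δ : ℝ) (hδ : 0 < δ) (c : ℝ) :
    ∃ θ₀ : ℝ, 0 < θ₀ ∧ θ₀ < δ ∧ θ₀ < 2 * Real.pi ∧ |c| * θ₀ < 2 * Real.pi := by
  have hpi := Real.pi_pos
  have habs := abs_nonneg c
  set M := min δ (2 * Real.pi) with hM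
  have hMpos : 0 < M := lt_min hδ (by positivity)
  have hM1 : M ≤ δ := min_le_left _ _
  have hM2 : M ≤ 2 * Real.pi := min_le_right _ _
  set D := 2 * (|c| + 1) with hD
  have hDpos : (0 : ℝ) < D := by positivity
  refine ⟨M / D, by positivity, ?_, ?_, ?_⟩
  · rw [div_lt_iff₀ hDpos]; nlinarith
  · rw [div_lt_iff₀ hDpos]; nlinarith
  · rw [mul_div_assoc'] at *
    rw [div_lt_iff₀ hDpos]; nlinarith

/-- If 1 - e^{imθ/n} = ε · e^{ikθ} · (1 - e^{iθ}) for all sufficiently small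
θ > 0, then |m| = n; moreover m > 0 forces ε = 1 and k = 0, while m < 0
forces ε = -1 and k = -1. -/
theorem torsion_taylor_constraints (n : ℕ) (hn : 0 < n) (m : ℤ) (hm : m ≠ 0)
    (k : ℤ) (ε : ℝ) (hε : ε = 1 ∨ ε = -1)
    (h : ∃ δ : ℝ, 0 < δ ∧ ∀ θ : ℝ, 0 < θ → θ < δ →
      1 - Complex.exp (Complex.I * ((m : ℂ) * (θ : ℂ) / (n : ℂ))) =
        (ε : ℂ) * Complex.exp (Complex.I * ((k : ℂ) * (θ : ℂ))) *
          (1 - Complex.exp (Complex.I * (θ : ℂ)))) :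
    m.natAbs = n ∧ (0 < m → ε = 1 ∧ k = 0) ∧ (m < 0 → ε = -1 ∧ k = -1) := by
  obtain ⟨δ, hδ, heq⟩ := h
  have hn0 : (n : ℂ) ≠ 0 := Nat.cast_ne_zero.mpr hn.ne'
  have hnR : (n : ℝ) ≠ 0 := Nat.cast_ne_zero.mpr hn.ne'
  -- the two functions
  set F : ℝ → ℂ := fun θ => 1 - Complex.exp (Complex.I * ((m : ℂ) * (θ : ℂ) / (n : ℂ)))
    with hFdef
  set G : ℝ → ℂ := fun θ => (ε : ℂ) * Complex.exp (Complex.I * ((k : ℂ) * (θ : ℂ))) *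
    (1 - Complex.exp (Complex.I * (θ : ℂ))) with hGdef
  -- derivatives at 0
  have hcF : HasDerivAt F (-(Complex.I * (m : ℂ) / (n : ℂ))) 0 := by
    have h1 := hasDerivAt_exp_mul_zero (Complex.I * (m : ℂ) / (n : ℂ))
    have h2 : (fun θ : ℝ => Complex.exp (Complex.I * (m : ℂ) / (n : ℂ) * θ)) =
        fun θ : ℝ => Complex.exp (Complex.I * ((m : ℂ) * (θ : ℂ) / (n : ℂ))) := by
      funext θ; congr 1; ring
    rw [h2] at h1
    simpa [hFdef, Pi.sub_def] using (hasDerivAt_const (0 : ℝ) (1 : ℂ)).sub h1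
  have hcG : HasDerivAt G (-((ε : ℂ) * Complex.I)) 0 := by
    have hu : HasDerivAt (fun θ : ℝ => (ε : ℂ) * Complex.exp (Complex.I * (k : ℂ) * θ))
        ((ε : ℂ) * (Complex.I * (k : ℂ))) 0 :=
      (hasDerivAt_exp_mul_zero (Complex.I * (k : ℂ))).const_mul _
    have hv : HasDerivAt (fun θ : ℝ => 1 - Complex.exp (Complex.I * (θ : ℂ)))
        (-Complex.I) 0 := by
      simpa [Pi.sub_def] using (hasDerivAt_const (0 : ℝ) (1 : ℂ)).sub (hasDerivAt_exp_mul_zero Complex.I)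
    have hmul := hu.mul hv
    have h2 : (fun θ : ℝ => (ε : ℂ) * Complex.exp (Complex.I * (k : ℂ) * θ) *
        (1 - Complex.exp (Complex.I * (θ : ℂ)))) = G := by
      funext θ; simp only [hGdef, mul_assoc]
    simp only [Pi.mul_def] at hmul
    rw [h2] at hmul
    refine hmul.congr_deriv ?_
    simp [Complex.exp_zero]
  -- compare slopes along 𝓝[Ioo 0 δ] 0
  have hne : (nhdsWithin (0 : ℝ) (Set.Ioo 0 δ)).NeBot := by
    apply mem_closure_iff_nhdsWithin_neBot.mp
    rw [closure_Ioo hδ.ne]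
    exact Set.left_mem_Icc.mpr hδ.le
  have hle : nhdsWithin (0 : ℝ) (Set.Ioo 0 δ) ≤ nhdsWithin (0 : ℝ) {(0:ℝ)}ᶜ :=
    nhdsWithin_mono _ (fun x hx => hx.1.ne')
  have tF := (hasDerivAt_iff_tendsto_slope.mp hcF).mono_left hle
  have tG := (hasDerivAt_iff_tendsto_slope.mp hcG).mono_left hle
  have hcongr : slope F 0 =ᶠ[nhdsWithin (0 : ℝ) (Set.Ioo 0 δ)] slope G 0 := by
    filter_upwards [self_mem_nhdsWithin] with x hx
    have hF0 : F 0 = 0 := by simp [hFdef]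
    have hG0 : G 0 = 0 := by simp [hGdef]
    simp [slope, hF0, hG0, show F x = G x from heq x hx.1 hx.2]
  have hEq := tendsto_nhds_unique (tF.congr' hcongr) tG
  -- hEq : -(I * m / n) = -(ε * I)
  have E2 : (m : ℂ) / (n : ℂ) = (ε : ℂ) := by
    linear_combination Complex.I * hEq +
      ((m : ℂ) / (n : ℂ) - (ε : ℂ)) * Complex.I_mul_I
  have E3 : (m : ℝ) / (n : ℝ) = ε := by exact_mod_cast E2
  have E4 : (m : ℝ) = ε * n := by field_simp at E3; linarith [E3]
  -- choose a small θ₀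
  obtain ⟨θ₀, ht0, htδ, ht2π, htb⟩ := exists_theta δ hδ (|(k : ℝ)| + 1)
  rw [abs_of_pos (by positivity)] at htb
  have hsmall : ∀ c : ℤ, |(c : ℝ)| ≤ |(k : ℝ)| + 1 → |(c : ℝ)| * θ₀ < 2 * Real.pi := by
    intro c hc
    calc |(c : ℝ)| * θ₀ ≤ (|(k : ℝ)| + 1) * θ₀ := by nlinarith
    _ < 2 * Real.pi := htb
  have hnz : 1 - Complex.exp (Complex.I * (θ₀ : ℂ)) ≠ 0 := by
    intro hz
    have hz1 : Complex.exp (Complex.I * ((1 : ℤ) * (θ₀ : ℂ))) = 1 := by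
      push_cast
      rw [one_mul]
      exact (sub_eq_zero.mp hz).symm
    have := exp_eq_one_small 1 θ₀ ht0 (by simpa using ht2π) hz1
    simp at this
  have Eq1 := heq θ₀ ht0 htδ
  rcases hε with rfl | rfl
  · -- ε = 1 : m = n
    have hmint : m = (n : ℤ) := by
      have : (m : ℝ) = (n : ℝ) := by rw [E4]; ring
      exact_mod_cast this
    have harg : (m : ℂ) * (θ₀ : ℂ) / (n : ℂ) = (θ₀ : ℂ) := by
      rw [show (m : ℂ) = (n : ℂ) by exact_mod_cast congrArg (Int.cast : ℤ → ℂ) hmint]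
      field_simp
    rw [harg] at Eq1
    have hk1 : Complex.exp (Complex.I * ((k : ℂ) * (θ₀ : ℂ))) = 1 := by
      apply mul_right_cancel₀ hnz
      push_cast at Eq1
      linear_combination -Eq1
    have hk0 : k = 0 := exp_eq_one_small k θ₀ ht0
      (hsmall k (by linarith [abs_nonneg ((k : ℝ))])) hk1
    refine ⟨by omega, fun _ => ⟨rfl, hk0⟩, fun hneg => absurd hmint (by omega)⟩
  · -- ε = -1 : m = -n
    have hmint : m = -(n : ℤ) := by
      have : (m : ℝ) = -(n : ℝ) := by rw [E4]; ring
      exact_mod_cast this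
    have harg : (m : ℂ) * (θ₀ : ℂ) / (n : ℂ) = -(θ₀ : ℂ) := by
      rw [show (m : ℂ) = -(n : ℂ) by exact_mod_cast congrArg (Int.cast : ℤ → ℂ) hmint]
      field_simp
    rw [harg] at Eq1
    have hrw : Complex.exp (Complex.I * -(θ₀ : ℂ)) =
        (Complex.exp (Complex.I * (θ₀ : ℂ)))⁻¹ := by
      rw [← Complex.exp_neg]; ring_nf
    rw [hrw] at Eq1
    have hv : Complex.exp (Complex.I * (θ₀ : ℂ)) ≠ 0 := Complex.exp_ne_zero _
    have hfac : (1 - Complex.exp (Complex.I * (θ₀ : ℂ))) *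
        (Complex.exp (Complex.I * ((k : ℂ) * (θ₀ : ℂ))) *
          Complex.exp (Complex.I * (θ₀ : ℂ)) - 1) = 0 := by
      push_cast at Eq1
      linear_combination Complex.exp (Complex.I * (θ₀ : ℂ)) * Eq1 + mul_inv_cancel₀ hv
    have hprod : Complex.exp (Complex.I * ((k : ℂ) * (θ₀ : ℂ))) *
        Complex.exp (Complex.I * (θ₀ : ℂ)) = 1 := by
      rcases mul_eq_zero.mp hfac with h | h
      · exact absurd h hnz
      · exact sub_eq_zero.mp h
    have hk1 : Complex.exp (Complex.I * (((k + 1 : ℤ) : ℂ) * (θ₀ : ℂ))) = 1 := by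
      rw [show Complex.I * (((k + 1 : ℤ) : ℂ) * (θ₀ : ℂ)) =
        Complex.I * ((k : ℂ) * (θ₀ : ℂ)) + Complex.I * (θ₀ : ℂ) by push_cast; ring,
        Complex.exp_add]
      exact hprod
    have hk0 : k + 1 = 0 := exp_eq_one_small (k + 1) θ₀ ht0
      (hsmall (k + 1) (by push_cast; exact (abs_add_le _ _).trans (by simp))) hk1
    refine ⟨by omega, fun hpos => absurd hmint (by omega), fun _ => ⟨rfl, by omega⟩⟩
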